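/- In the linear-quadratic coalition game, a two-country coalition {1, j} (with j ≠ 1) is a Nash equilibrium of the participation game if and only if: 2P_j ≥ P_1 (country j stays), 2P_1 ≥ P_j (country 1 stays), and for every k ∉ {1, j}, joining is not strictly profitable, which holds iff 2P_2 ≤ P_1 + P_j when j ≠ 2 (i.e., P_j ≥ 2P_2 − P_1). Consequently, with P_1 > P_2 > ... and 2P_2 > P_1, the coalition {1, j} is an equilibrium iff P_j ≥ max{P_1/2, 2P_2 − P_1}. -/
import Mathlib


/-- Characterization of equilibrium two-country coalitions `{1, j}` (0-based:
`{0, j}`) when `2P₂ > P₁`: the coalition is an equilibrium of the participation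
game iff `Pⱼ ≥ max{P₁/2, 2P₂ − P₁}`. -/
theorem stmt_11 (n : ℕ) (hn : 2 ≤ n) (P : Fin n → ℝ)
    (hanti : StrictAnti P) (hpos : ∀ i, 0 < P i)
    (h : 2 * P ⟨1, by omega⟩ > P ⟨0, by omega⟩)
    (j : Fin n) (hj : j ≠ ⟨0, by omega⟩) :
    ((2 * P j ≥ P ⟨0, by omega⟩)
      ∧ (2 * P ⟨0, by omega⟩ ≥ P j)
      ∧ (∀ k : Fin n, k ≠ ⟨0, by omega⟩ → k ≠ j →
          ¬ (2 * P k > P ⟨0, by omega⟩ + P j)))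
    ↔ P j ≥ max (P ⟨0, by omega⟩ / 2) (2 * P ⟨1, by omega⟩ - P ⟨0, by omega⟩) := by
  have hjv : j.val ≠ 0 := fun hv => hj (Fin.ext hv)
  have h0j : P j < P ⟨0, by omega⟩ := hanti (by simp only [Fin.lt_def, Fin.val_mk]; omega)
  have h01 : P ⟨1, by omega⟩ < P ⟨0, by omega⟩ := hanti (by simp only [Fin.lt_def, Fin.val_mk]; omega)
  constructor
  · rintro ⟨h1, h2, h3⟩
    rw [ge_iff_le, max_le_iff]
    refine ⟨by linarith, ?_⟩
    by_cases hj1 : j = ⟨1, by omega⟩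
    · rw [hj1]; linarith
    · have hk := h3 ⟨1, by omega⟩ (by simp [Fin.ext_iff]) (fun e => hj1 e.symm)
      push_neg at hk
      linarith
  · intro hmax
    rw [ge_iff_le, max_le_iff] at hmax
    obtain ⟨hm1, hm2⟩ := hmax
    refine ⟨by linarith, by linarith [hpos j], ?_⟩
    intro k hk0 hkj
    have hkv : k.val ≠ 0 := fun hv => hk0 (Fin.ext hv)
    by_cases hk1 : k = ⟨1, by omega⟩
    · rw [hk1]; linarith
    · have hkv1 : 1 < k.val := by
        rcases Nat.lt_or_ge 1 k.val with h' | h'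
        · exact h'
        · exact absurd (Fin.ext (by simp only [Fin.val_mk]; omega)) hk1
      have : P k < P ⟨1, by omega⟩ := hanti (by simp only [Fin.lt_def, Fin.val_mk]; exact hkv1)
      linarith
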